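/- arXiv:2010.01058 — 3 statements merged into one kernel-verified Lean document; each statement's English description precedes it below -/
import Mathlib

section
/- Let S_{B'} be a positive semidefinite d×d matrix, and let V_{AB'} be a Hermitian operator on ℂ^{d_A} ⊗ ℂ^d such that I_A ⊗ S_{B'} + V_{AB'} ≥ 0 and I_A ⊗ S_{B'} - V_{AB'} ≥ 0. Let ℳ : M_{d_A}(ℂ) → M_d(ℂ) be a completely positive map with Choi operator Γ^ℳ_{AB'} satisfying (id_A ⊗ T_{B'})(V_{AB'} ± Γ^ℳ_{AB'}) ≥ 0. Suppose d_A = d and let Φ̄_{ÂA} = (1/d) Σ_{i=0}^{d-1} |i⟩⟨i|_Â ⊗ |i⟩⟨i|_A be the maximally classically correlated state and Π_{ÂB'} = Σ_{i=0}^{d-1} |i⟩⟨i|_Â ⊗ |i⟩⟨i|_{B'} the comparator projection. Then Tr[Π_{ÂB'} (id_Â ⊗ ℳ)(Φ̄_{ÂA})] ≤ Tr[S_{B'}]/d. -/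
open Matrix
open scoped Kronecker ComplexOrder

/-- The Choi matrix `Γ^ℳ = Σ_{i,j} |i⟩⟨j| ⊗ ℳ(|i⟩⟨j|)` of a linear map. -/
noncomputable def choiMatrix {da db : ℕ}
    (P : Matrix (Fin da) (Fin da) ℂ →ₗ[ℂ] Matrix (Fin db) (Fin db) ℂ) :
    Matrix (Fin da × Fin db) (Fin da × Fin db) ℂ :=
  Matrix.of fun p q => P (Matrix.single p.1 q.1 1) p.2 q.2

/-- The partial transpose on the second (output) factor `B'`. -/
def partialTransposeB {dA dB : ℕ}
    (X : Matrix (Fin dA × Fin dB) (Fin dA × Fin dB) ℂ) :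
    Matrix (Fin dA × Fin dB) (Fin dA × Fin dB) ℂ :=
  Matrix.of fun p q => X (p.1, q.2) (q.1, p.2)

/-- The tensor extension `id_Â ⊗ ℳ` applied to an operator on `Â ⊗ A`. -/
noncomputable def tensorExt {dS dA dB : ℕ}
    (M : Matrix (Fin dA) (Fin dA) ℂ →ₗ[ℂ] Matrix (Fin dB) (Fin dB) ℂ)
    (ρ : Matrix (Fin dS × Fin dA) (Fin dS × Fin dA) ℂ) :
    Matrix (Fin dS × Fin dB) (Fin dS × Fin dB) ℂ :=
  Matrix.of fun p q =>
    ∑ x : Fin dA, ∑ y : Fin dA,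
      ρ (p.1, x) (q.1, y) * M (Matrix.single x y 1) p.2 q.2


private lemma diag_nonneg' {n : Type*} [Fintype n] [DecidableEq n] {A : Matrix n n ℂ}
    (hA : A.PosSemidef) (i : n) : 0 ≤ A i i := by
  exact hA.diag_nonneg

/-- Bound on the comparator test success probability: if `(S, V)` is
feasible for `β(ℳ) ≤ Tr[S]` (in the point-to-point form), then sending one share of the
maximally classically correlated state `Φ̄` through the completely positive map `ℳ`
passes the comparator test `Π` with probability at most `Tr[S]/d`. -/
theorem comparator_test_bound {d : ℕ} (hd : 0 < d)
    (M : Matrix (Fin d) (Fin d) ℂ →ₗ[ℂ] Matrix (Fin d) (Fin d) ℂ)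
    (hCP : (choiMatrix M).PosSemidef)
    (S : Matrix (Fin d) (Fin d) ℂ) (hS : S.PosSemidef)
    (V : Matrix (Fin d × Fin d) (Fin d × Fin d) ℂ) (hV : V.IsHermitian)
    (h1 : ((1 : Matrix (Fin d) (Fin d) ℂ) ⊗ₖ S + V).PosSemidef)
    (h2 : ((1 : Matrix (Fin d) (Fin d) ℂ) ⊗ₖ S - V).PosSemidef)
    (h3 : (partialTransposeB (V + choiMatrix M)).PosSemidef)
    (h4 : (partialTransposeB (V - choiMatrix M)).PosSemidef) :
    ((Matrix.of fun p q : Fin d × Fin d =>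
        if p.1 = p.2 ∧ q.1 = q.2 ∧ p.1 = q.1 then (1 : ℂ) else 0) *
      tensorExt M (Matrix.of fun p q : Fin d × Fin d =>
        if p.1 = p.2 ∧ q.1 = q.2 ∧ p.1 = q.1 then ((d : ℂ))⁻¹ else 0)).trace
      ≤ S.trace / d := by
  have hinv : (0:ℂ) ≤ ((d:ℂ))⁻¹ := by
    have : ((d:ℂ))⁻¹ = (((d:ℝ)⁻¹ : ℝ) : ℂ) := by push_cast; ring
    rw [this]; norm_cast; positivity
  have hLHS : ((Matrix.of fun p q : Fin d × Fin d =>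
        if p.1 = p.2 ∧ q.1 = q.2 ∧ p.1 = q.1 then (1 : ℂ) else 0) *
      tensorExt M (Matrix.of fun p q : Fin d × Fin d =>
        if p.1 = p.2 ∧ q.1 = q.2 ∧ p.1 = q.1 then ((d : ℂ))⁻¹ else 0)).trace
      = (d:ℂ)⁻¹ * ∑ i : Fin d, choiMatrix M (i,i) (i,i) := by
    simp only [Matrix.trace, Matrix.diag, Matrix.mul_apply, Matrix.of_apply, tensorExt,
      choiMatrix, Fintype.sum_prod_type]
    simp [ite_and, Finset.mul_sum, mul_ite, mul_zero, ite_mul, zero_mul, one_mul,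
      Finset.sum_ite_eq, Finset.sum_ite_eq']
  have key : ∀ i : Fin d, choiMatrix M (i,i) (i,i) ≤ S i i := by
    intro i
    have hv := diag_nonneg' h4 (i,i)
    have hs := diag_nonneg' h2 (i,i)
    simp only [partialTransposeB, Matrix.of_apply, Matrix.sub_apply,
      Matrix.kroneckerMap_apply, Matrix.one_apply_eq, one_mul] at hv hs
    have h1' := sub_nonneg.mp hv
    have h2' := sub_nonneg.mp hs
    exact le_trans h1' h2'
  rw [hLHS, div_eq_inv_mul, Matrix.trace]
  exact mul_le_mul_of_nonneg_left (Finset.sum_le_sum fun i _ => key i) hinv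
end

section
/- Let 𝒩 : M_{d_A}(ℂ) → M_{d_B}(ℂ) be a quantum channel (completely positive and trace-preserving). Suppose Hermitian operators S_{B'} and V_{AB'}, with S_{B'} acting on ℂ^{d_B}, satisfy (id_A ⊗ T_{B'})(V_{AB'} + Γ^𝒩_{AB'}) ≥ 0, (id_A ⊗ T_{B'})(V_{AB'} - Γ^𝒩_{AB'}) ≥ 0, I_A ⊗ S_{B'} + V_{AB'} ≥ 0, and I_A ⊗ S_{B'} - V_{AB'} ≥ 0, where Γ^𝒩 is the Choi operator of 𝒩 and T_{B'} the partial transpose. Then Tr[S_{B'}] ≥ 1. -/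
open Matrix
open scoped Kronecker ComplexOrder

lemma trace_partialTransposeB {dA dB : ℕ}
    (X : Matrix (Fin dA × Fin dB) (Fin dA × Fin dB) ℂ) :
    (partialTransposeB X).trace = X.trace := by
  simp [Matrix.trace, partialTransposeB, Matrix.diag]

lemma trace_choiMatrix {dA dB : ℕ}
    (N : Matrix (Fin dA) (Fin dA) ℂ →ₗ[ℂ] Matrix (Fin dB) (Fin dB) ℂ)
    (hTP : ∀ X : Matrix (Fin dA) (Fin dA) ℂ, (N X).trace = X.trace) :
    (choiMatrix N).trace = (dA : ℂ) := by
  have : (choiMatrix N).trace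
      = ∑ i : Fin dA, (N (Matrix.single i i 1)).trace := by
    simp [Matrix.trace, choiMatrix, Matrix.diag, Fintype.sum_prod_type]
  rw [this]
  have h : ∀ i : Fin dA, (N (Matrix.single i i 1)).trace = 1 := by
    intro i
    rw [hTP]
    simp [Matrix.trace, Matrix.diag, Matrix.single, Finset.sum_ite_eq]
  simp [h]


lemma psd_trace_nonneg {n : Type*} [Fintype n] [DecidableEq n] {X : Matrix n n ℂ}
    (hX : X.PosSemidef) : (0 : ℂ) ≤ X.trace := by
  have hdiag : ∀ i, (0 : ℂ) ≤ X i i := by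
    intro i
    exact hX.diag_nonneg
  exact Finset.sum_nonneg fun i _ => hdiag i

/-- Non-negativity of the β measure for a point-to-point quantum
channel: if `𝒩` is completely positive and trace preserving and `(S, V)` is a feasible
Hermitian pair, i.e. `(id ⊗ T_{B'})(V ± Γ^𝒩) ≥ 0` and `I_A ⊗ S ± V ≥ 0`,
then `Tr[S] ≥ 1`. -/
theorem beta_feasible_trace_ge_one {dA dB : ℕ}
    (N : Matrix (Fin dA) (Fin dA) ℂ →ₗ[ℂ] Matrix (Fin dB) (Fin dB) ℂ)
    (hCP : (choiMatrix N).PosSemidef)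
    (hTP : ∀ X : Matrix (Fin dA) (Fin dA) ℂ, (N X).trace = X.trace)
    (S : Matrix (Fin dB) (Fin dB) ℂ) (hS : S.IsHermitian)
    (V : Matrix (Fin dA × Fin dB) (Fin dA × Fin dB) ℂ) (hV : V.IsHermitian)
    (h1 : (partialTransposeB (V + choiMatrix N)).PosSemidef)
    (h2 : (partialTransposeB (V - choiMatrix N)).PosSemidef)
    (h3 : ((1 : Matrix (Fin dA) (Fin dA) ℂ) ⊗ₖ S + V).PosSemidef)
    (h4 : ((1 : Matrix (Fin dA) (Fin dA) ℂ) ⊗ₖ S - V).PosSemidef)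
    (hdA : 0 < dA) (hdB : 0 < dB) :
    (1 : ℂ) ≤ S.trace := by
  have hΓ : (choiMatrix N).trace = (dA : ℂ) := trace_choiMatrix N hTP
  -- Tr V ≥ dA
  have t2 : (0 : ℂ) ≤ (partialTransposeB (V - choiMatrix N)).trace :=
    psd_trace_nonneg h2
  rw [trace_partialTransposeB, Matrix.trace_sub, hΓ, sub_nonneg] at t2
  -- dA Tr S ≥ Tr V
  have t4 : (0 : ℂ) ≤ ((1 : Matrix (Fin dA) (Fin dA) ℂ) ⊗ₖ S - V).trace :=
    psd_trace_nonneg h4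
  rw [Matrix.trace_sub, Matrix.trace_kronecker, Matrix.trace_one, sub_nonneg] at t4
  have key : (dA : ℂ) ≤ (dA : ℂ) * S.trace := by
    calc (dA : ℂ) ≤ V.trace := t2
    _ ≤ (dA : ℂ) * S.trace := by simpa [Fintype.card_fin] using t4
  have hre : (dA : ℝ) ≤ (dA : ℝ) * S.trace.re ∧ (0:ℝ) = (dA:ℝ) * S.trace.im := by
    rw [Complex.le_def] at key
    constructor
    · simpa using key.1
    · simpa using key.2
  have hdR : (0:ℝ) < (dA:ℝ) := by exact_mod_cast hdA
  have h1' : (1:ℝ) ≤ S.trace.re := by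
    nlinarith [hre.1]
  have h2' : S.trace.im = 0 := by
    rcases mul_eq_zero.mp hre.2.symm with h | h
    · exact absurd h (ne_of_gt hdR)
    · exact h
  rw [Complex.le_def]
  simp [h1', h2']
end

section
/- Submultiplicativity of the β measure under composition (point-to-point version): let ℳ¹ : M_{d_A}(ℂ) → M_{d_B}(ℂ) and ℳ² : M_{d_B}(ℂ) → M_{d_C}(ℂ) be completely positive maps. Suppose (S¹, V¹) is feasible for β(ℳ¹) with value Tr[S¹] and (S², V²) is feasible for β(ℳ²) with value Tr[S²]; i.e., T_B(V¹ ± Γ^{ℳ¹}_{AB}) ≥ 0, I_A ⊗ S¹_B ± V¹_{AB} ≥ 0, T_C(V² ± Γ^{ℳ²}_{BC}) ≥ 0, I_B ⊗ S²_C ± V²_{BC} ≥ 0. Then there is a feasible pair for β(ℳ² ∘ ℳ¹) with value at most Tr[S¹]·Tr[S²]; consequently β(ℳ² ∘ ℳ¹) ≤ β(ℳ¹)·β(ℳ²). -/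
open Matrix
open scoped Kronecker ComplexOrder

/-- The partial transpose on the second (output) factor. -/
def partialTransposeOut {dA dB : ℕ}
    (X : Matrix (Fin dA × Fin dB) (Fin dA × Fin dB) ℂ) :
    Matrix (Fin dA × Fin dB) (Fin dA × Fin dB) ℂ :=
  Matrix.of fun p q => X (p.1, q.2) (q.1, p.2)

section Helpers
variable {dA dB dC : ℕ}

lemma sum3_comm {M N P : Type*} [Fintype M] [Fintype N] [Fintype P] (g : M → N → P → ℂ) :
    ∑ m, ∑ n, ∑ p, g m n p = ∑ n, ∑ p, ∑ m, g m n p := by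
  rw [Finset.sum_comm]
  exact Finset.sum_congr rfl fun n _ => Finset.sum_comm

lemma sum4_comm {M N P Q : Type*} [Fintype M] [Fintype N] [Fintype P] [Fintype Q]
    (f : M → N → P → Q → ℂ) :
    ∑ m, ∑ n, ∑ p, ∑ q, f m n p q = ∑ p, ∑ q, ∑ m, ∑ n, f m n p q := by
  have h1 : ∑ m, ∑ n, ∑ p, ∑ q, f m n p q = ∑ m, ∑ p, ∑ q, ∑ n, f m n p q :=
    Finset.sum_congr rfl fun m _ => sum3_comm _
  rw [h1, sum3_comm]


noncomputable def ctr (X : Matrix (Fin dA × Fin dB) (Fin dA × Fin dB) ℂ)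
    (Y : Matrix (Fin dB × Fin dC) (Fin dB × Fin dC) ℂ) :
    Matrix (Fin dA × Fin dC) (Fin dA × Fin dC) ℂ :=
  Matrix.of fun p q => ∑ b : Fin dB, ∑ b' : Fin dB,
    X (p.1, b) (q.1, b') * Y (b, p.2) (b', q.2)

lemma ctr_apply (X : Matrix (Fin dA × Fin dB) (Fin dA × Fin dB) ℂ)
    (Y : Matrix (Fin dB × Fin dC) (Fin dB × Fin dC) ℂ) (p q) :
    ctr X Y p q = ∑ b : Fin dB, ∑ b' : Fin dB,
      X (p.1, b) (q.1, b') * Y (b, p.2) (b', q.2) := rfl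

lemma posSemidef_iff_eq_transpose_mul_self {n : Type*} [Fintype n] [DecidableEq n]
    {A : Matrix n n ℂ} : A.PosSemidef ↔ ∃ B : Matrix n n ℂ, A = Bᴴ * B := by
  open scoped MatrixOrder Matrix.Norms.L2Operator in
  refine ⟨fun h => CStarAlgebra.nonneg_iff_eq_star_mul_self.mp h.nonneg, ?_⟩
  rintro ⟨B, rfl⟩
  exact posSemidef_conjTranspose_mul_self B

lemma ctr_psd {X : Matrix (Fin dA × Fin dB) (Fin dA × Fin dB) ℂ}
    {Y : Matrix (Fin dB × Fin dC) (Fin dB × Fin dC) ℂ}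
    (hX : X.PosSemidef) (hY : Y.PosSemidef) : (ctr X Y).PosSemidef := by
  obtain ⟨B, rfl⟩ := posSemidef_iff_eq_transpose_mul_self.mp hX
  obtain ⟨C, rfl⟩ := posSemidef_iff_eq_transpose_mul_self.mp hY
  have h : ctr (Bᴴ * B) (Cᴴ * C) =
      (Matrix.of fun (kl : (Fin dA × Fin dB) × (Fin dB × Fin dC)) (q : Fin dA × Fin dC) =>
        ∑ b : Fin dB, B kl.1 (q.1, b) * C kl.2 (b, q.2))ᴴ *
      (Matrix.of fun (kl : (Fin dA × Fin dB) × (Fin dB × Fin dC)) (q : Fin dA × Fin dC) =>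
        ∑ b : Fin dB, B kl.1 (q.1, b) * C kl.2 (b, q.2)) := by
    ext p q
    simp only [ctr_apply, Matrix.mul_apply, Matrix.conjTranspose_apply, Matrix.of_apply]
    conv_rhs => rw [Fintype.sum_prod_type]
    simp only [star_sum, star_mul', Finset.sum_mul, Finset.mul_sum]
    rw [sum4_comm, Finset.sum_comm]
    apply Finset.sum_congr rfl; intro k _
    apply Finset.sum_congr rfl; intro l _
    rw [Finset.sum_comm]
    apply Finset.sum_congr rfl; intro b _
    apply Finset.sum_congr rfl; intro b' _
    ring
  rw [h]
  exact posSemidef_conjTranspose_mul_self _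

lemma ctr_herm {X : Matrix (Fin dA × Fin dB) (Fin dA × Fin dB) ℂ}
    {Y : Matrix (Fin dB × Fin dC) (Fin dB × Fin dC) ℂ}
    (hX : X.IsHermitian) (hY : Y.IsHermitian) : (ctr X Y).IsHermitian := by
  apply Matrix.IsHermitian.ext
  intro p q
  rw [ctr_apply, ctr_apply, star_sum]
  rw [Finset.sum_comm]
  apply Finset.sum_congr rfl; intro b _
  rw [star_sum]
  apply Finset.sum_congr rfl; intro b' _
  rw [star_mul', hX.apply, hY.apply]

lemma ctr_add_right (X : Matrix (Fin dA × Fin dB) (Fin dA × Fin dB) ℂ)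
    (Y Z : Matrix (Fin dB × Fin dC) (Fin dB × Fin dC) ℂ) :
    ctr X (Y + Z) = ctr X Y + ctr X Z := by
  ext p q
  simp [ctr_apply, mul_add, Finset.sum_add_distrib]

lemma ctr_sub_right (X : Matrix (Fin dA × Fin dB) (Fin dA × Fin dB) ℂ)
    (Y Z : Matrix (Fin dB × Fin dC) (Fin dB × Fin dC) ℂ) :
    ctr X (Y - Z) = ctr X Y - ctr X Z := by
  ext p q
  simp [ctr_apply, mul_sub, Finset.sum_sub_distrib]

lemma pt_ctr (X : Matrix (Fin dA × Fin dB) (Fin dA × Fin dB) ℂ)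
    (Y : Matrix (Fin dB × Fin dC) (Fin dB × Fin dC) ℂ) :
    partialTransposeOut (ctr X Y) = ctr X (partialTransposeOut Y) := by
  ext p q
  simp [partialTransposeOut, ctr_apply]

lemma pt_add (X Y : Matrix (Fin dA × Fin dB) (Fin dA × Fin dB) ℂ) :
    partialTransposeOut (X + Y) = partialTransposeOut X + partialTransposeOut Y := by
  ext p q; simp [partialTransposeOut]

lemma pt_sub (X Y : Matrix (Fin dA × Fin dB) (Fin dA × Fin dB) ℂ) :
    partialTransposeOut (X - Y) = partialTransposeOut X - partialTransposeOut Y := by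
  ext p q; simp [partialTransposeOut]

lemma choi_comp (M1 : Matrix (Fin dA) (Fin dA) ℂ →ₗ[ℂ] Matrix (Fin dB) (Fin dB) ℂ)
    (M2 : Matrix (Fin dB) (Fin dB) ℂ →ₗ[ℂ] Matrix (Fin dC) (Fin dC) ℂ) :
    choiMatrix (M2 ∘ₗ M1) = ctr (choiMatrix M1) (choiMatrix M2) := by
  ext ⟨a, c⟩ ⟨a', c'⟩
  show (M2 (M1 (Matrix.single a a' 1))) c c' = _
  rw [ctr_apply]
  conv_lhs => rw [Matrix.matrix_eq_sum_single (M1 (Matrix.single a a' 1))]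
  rw [map_sum, Matrix.sum_apply]
  apply Finset.sum_congr rfl; intro b _
  rw [map_sum, Matrix.sum_apply]
  apply Finset.sum_congr rfl; intro b' _
  have : Matrix.single b b' (M1 (Matrix.single a a' 1) b b')
      = (M1 (Matrix.single a a' 1) b b') • Matrix.single b b' (1 : ℂ) := by
    rw [Matrix.smul_single, smul_eq_mul, mul_one]
  rw [this, _root_.map_smul, Matrix.smul_apply, smul_eq_mul]
  rfl

noncomputable def ptraceB (X : Matrix (Fin dA × Fin dB) (Fin dA × Fin dB) ℂ) :
    Matrix (Fin dA) (Fin dA) ℂ :=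
  Matrix.of fun a a' => ∑ b : Fin dB, X (a, b) (a', b)

lemma ptraceB_psd {X : Matrix (Fin dA × Fin dB) (Fin dA × Fin dB) ℂ}
    (hX : X.PosSemidef) : (ptraceB X).PosSemidef := by
  have h : ptraceB X = ∑ b : Fin dB,
      X.submatrix (fun a : Fin dA => (a, b)) (fun a : Fin dA => (a, b)) := by
    ext a a'
    simp [ptraceB, Matrix.sum_apply, Matrix.submatrix_apply]
  rw [h]
  have hz : (0 : Matrix (Fin dA) (Fin dA) ℂ).PosSemidef := Matrix.PosSemidef.zero
  exact Finset.sum_induction _ Matrix.PosSemidef (fun A B hA hB => hA.add hB) hz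
    (fun b _ => hX.submatrix _)

lemma kron_psd {m n : ℕ} {X : Matrix (Fin m) (Fin m) ℂ} {Y : Matrix (Fin n) (Fin n) ℂ}
    (hX : X.PosSemidef) (hY : Y.PosSemidef) : (X ⊗ₖ Y).PosSemidef := by
  obtain ⟨B, rfl⟩ := posSemidef_iff_eq_transpose_mul_self.mp hX
  obtain ⟨C, rfl⟩ := posSemidef_iff_eq_transpose_mul_self.mp hY
  rw [Matrix.mul_kronecker_mul]
  have h : Bᴴ ⊗ₖ Cᴴ = (B ⊗ₖ C)ᴴ := by
    ext p q
    simp [Matrix.kroneckerMap_apply, Matrix.conjTranspose_apply, star_mul', mul_comm]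
  rw [h]
  exact posSemidef_conjTranspose_mul_self _

lemma half_psd {ι : Type*} [Fintype ι] [DecidableEq ι] {N V : Matrix ι ι ℂ}
    (h1 : (N + V).PosSemidef) (h2 : (N - V).PosSemidef) : N.PosSemidef := by
  rw [posSemidef_iff_dotProduct_mulVec] at h1 h2 ⊢
  constructor
  · have := h1.1.add h2.1
    have e : (N + V) + (N - V) = N + N := by abel
    rw [e] at this
    have h' : Nᴴ + Nᴴ = N + N := by
      have := this.eq
      rwa [Matrix.conjTranspose_add] at this
    unfold Matrix.IsHermitian
    ext i j
    have h2 := congrArg (fun M => M i j) h'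
    simp only [Matrix.add_apply, Matrix.conjTranspose_apply] at h2
    rw [Matrix.conjTranspose_apply]
    exact by linear_combination h2 / 2
  · intro x
    have hadd := add_nonneg (h1.2 x) (h2.2 x)
    have e : star x ⬝ᵥ (N + V).mulVec x + star x ⬝ᵥ (N - V).mulVec x
        = 2 * (star x ⬝ᵥ N.mulVec x) := by
      rw [Matrix.add_mulVec, Matrix.sub_mulVec, dotProduct_add, dotProduct_sub]
      ring
    rw [e] at hadd
    rw [Complex.le_def] at hadd ⊢
    constructor
    · simp only [Complex.zero_re, Complex.mul_re] at hadd ⊢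
      norm_num at hadd
      linarith [hadd.1]
    · simp only [Complex.zero_im, Complex.mul_im] at hadd ⊢
      norm_num at hadd
      linarith [hadd.2]

lemma corner_psd {m n : ℕ} {S : Matrix (Fin n) (Fin n) ℂ}
    (h : ((1 : Matrix (Fin m) (Fin m) ℂ) ⊗ₖ S).PosSemidef) (b0 : Fin m) :
    S.PosSemidef := by
  have e : S = ((1 : Matrix (Fin m) (Fin m) ℂ) ⊗ₖ S).submatrix
      (fun c : Fin n => (b0, c)) (fun c : Fin n => (b0, c)) := by
    ext c c'
    simp [Matrix.submatrix_apply, Matrix.kroneckerMap_apply, Matrix.one_apply]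
  rw [e]
  exact h.submatrix _

lemma psd_trace_re_nonneg {n : ℕ} {S : Matrix (Fin n) (Fin n) ℂ}
    (h : S.PosSemidef) : 0 ≤ S.trace.re := by
  have : S.trace = ∑ i, S i i := rfl
  rw [this, Complex.re_sum]
  apply Finset.sum_nonneg
  intro i _
  have := h.dotProduct_mulVec_nonneg (Pi.single i 1)
  have e : star (Pi.single i 1 : Fin n → ℂ) ⬝ᵥ S.mulVec (Pi.single i 1) = S i i := by
    simp [dotProduct, Matrix.mulVec, Pi.single_apply, ite_mul, mul_ite]
  rw [e, Complex.le_def] at this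
  simpa using this.1

lemma psd_of_isEmpty {ι : Type*} [Fintype ι] [IsEmpty ι] (X : Matrix ι ι ℂ) :
    X.PosSemidef := by
  constructor
  · ext i j; exact isEmptyElim i
  · intro x
    rw [Finsupp.sum, Finset.eq_empty_of_isEmpty x.support, Finset.sum_empty]

lemma herm_of_isEmpty {ι : Type*} [IsEmpty ι] (X : Matrix ι ι ℂ) :
    X.IsHermitian := by
  ext i j; exact isEmptyElim i

end Helpers

/-- The point-to-point β measure:
`β(ℳ) = inf{Tr[S] : T_out(V ± Γ^ℳ) ≥ 0, I_in ⊗ S ± V ≥ 0, S, V Hermitian}`. -/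
noncomputable def beta {dA dB : ℕ}
    (M : Matrix (Fin dA) (Fin dA) ℂ →ₗ[ℂ] Matrix (Fin dB) (Fin dB) ℂ) : ℝ :=
  sInf {x : ℝ | ∃ (S : Matrix (Fin dB) (Fin dB) ℂ)
      (V : Matrix (Fin dA × Fin dB) (Fin dA × Fin dB) ℂ),
    S.IsHermitian ∧ V.IsHermitian ∧
    (partialTransposeOut (V + choiMatrix M)).PosSemidef ∧
    (partialTransposeOut (V - choiMatrix M)).PosSemidef ∧
    ((1 : Matrix (Fin dA) (Fin dA) ℂ) ⊗ₖ S + V).PosSemidef ∧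
    ((1 : Matrix (Fin dA) (Fin dA) ℂ) ⊗ₖ S - V).PosSemidef ∧
    x = S.trace.re}



lemma pt_zero {dA dB : ℕ} : partialTransposeOut (0 : Matrix (Fin dA × Fin dB) (Fin dA × Fin dB) ℂ) = 0 := by
  ext p q; simp [partialTransposeOut]

lemma key {dA dB dC : ℕ}
    (M1 : Matrix (Fin dA) (Fin dA) ℂ →ₗ[ℂ] Matrix (Fin dB) (Fin dB) ℂ)
    (M2 : Matrix (Fin dB) (Fin dB) ℂ →ₗ[ℂ] Matrix (Fin dC) (Fin dC) ℂ)
    (hM1 : (choiMatrix M1).PosSemidef) (hM2 : (choiMatrix M2).PosSemidef)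
    (S1 : Matrix (Fin dB) (Fin dB) ℂ)
    (V1 : Matrix (Fin dA × Fin dB) (Fin dA × Fin dB) ℂ)
    (hS1 : S1.IsHermitian) (hV1 : V1.IsHermitian)
    (h11 : (partialTransposeOut (V1 + choiMatrix M1)).PosSemidef)
    (h12 : (partialTransposeOut (V1 - choiMatrix M1)).PosSemidef)
    (h13 : ((1 : Matrix (Fin dA) (Fin dA) ℂ) ⊗ₖ S1 + V1).PosSemidef)
    (h14 : ((1 : Matrix (Fin dA) (Fin dA) ℂ) ⊗ₖ S1 - V1).PosSemidef)
    (S2 : Matrix (Fin dC) (Fin dC) ℂ)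
    (V2 : Matrix (Fin dB × Fin dC) (Fin dB × Fin dC) ℂ)
    (hS2 : S2.IsHermitian) (hV2 : V2.IsHermitian)
    (h21 : (partialTransposeOut (V2 + choiMatrix M2)).PosSemidef)
    (h22 : (partialTransposeOut (V2 - choiMatrix M2)).PosSemidef)
    (h23 : ((1 : Matrix (Fin dB) (Fin dB) ℂ) ⊗ₖ S2 + V2).PosSemidef)
    (h24 : ((1 : Matrix (Fin dB) (Fin dB) ℂ) ⊗ₖ S2 - V2).PosSemidef) :
    ∃ (S3 : Matrix (Fin dC) (Fin dC) ℂ)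
        (V3 : Matrix (Fin dA × Fin dC) (Fin dA × Fin dC) ℂ),
      S3.IsHermitian ∧ V3.IsHermitian ∧
      (partialTransposeOut (V3 + choiMatrix (M2 ∘ₗ M1))).PosSemidef ∧
      (partialTransposeOut (V3 - choiMatrix (M2 ∘ₗ M1))).PosSemidef ∧
      ((1 : Matrix (Fin dA) (Fin dA) ℂ) ⊗ₖ S3 + V3).PosSemidef ∧
      ((1 : Matrix (Fin dA) (Fin dA) ℂ) ⊗ₖ S3 - V3).PosSemidef ∧
      S3.trace.re ≤ S1.trace.re * S2.trace.re := by
  rcases Nat.eq_zero_or_pos dB with hdB | hdB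
  · subst hdB
    have hz : choiMatrix (M2 ∘ₗ M1) = 0 := by
      rw [choi_comp]; ext p q; simp [ctr_apply]
    have htr : S1.trace = 0 := by
      simp [Matrix.trace]
    refine ⟨0, 0, Matrix.isHermitian_zero, Matrix.isHermitian_zero, ?_, ?_, ?_, ?_, ?_⟩
    · rw [hz, add_zero, pt_zero]; exact Matrix.PosSemidef.zero
    · rw [hz, sub_zero, pt_zero]; exact Matrix.PosSemidef.zero
    · simpa [Matrix.kronecker_zero] using
        (Matrix.PosSemidef.zero : (0 : Matrix (Fin dA × Fin dC) (Fin dA × Fin dC) ℂ).PosSemidef)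
    · simpa [Matrix.kronecker_zero] using
        (Matrix.PosSemidef.zero : (0 : Matrix (Fin dA × Fin dC) (Fin dA × Fin dC) ℂ).PosSemidef)
    · simp [htr]
  · set Γ1 := choiMatrix M1 with hΓ1
    set Γ2 := choiMatrix M2 with hΓ2
    set c : ℂ := (S1.trace.re : ℂ) with hc
    have hS1re : S1.trace = c := by
      have h := congrArg Matrix.trace hS1.eq
      rw [Matrix.trace_conjTranspose] at h
      exact (Complex.conj_eq_iff_re.mp h).symm
    set S3 : Matrix (Fin dC) (Fin dC) ℂ := c • S2 with hS3def
    set V3 : Matrix (Fin dA × Fin dC) (Fin dA × Fin dC) ℂ := ctr Γ1 V2 with hV3def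
    have hS3 : S3.IsHermitian := by
      rw [hS3def]
      unfold Matrix.IsHermitian
      rw [Matrix.conjTranspose_smul, hS2.eq, hc]
      congr 1
      simp [Complex.star_def, Complex.conj_ofReal]
    have hV3 : V3.IsHermitian := ctr_herm hM1.1 hV2
    have hS2psd : S2.PosSemidef := by
      have h0 : ((1 : Matrix (Fin dB) (Fin dB) ℂ) ⊗ₖ S2).PosSemidef := half_psd (V := V2) h23 h24
      exact corner_psd h0 ⟨0, hdB⟩
    have hTrm : (c • (1 : Matrix (Fin dA) (Fin dA) ℂ) - ptraceB Γ1).PosSemidef := by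
      have e : c • (1 : Matrix (Fin dA) (Fin dA) ℂ) - ptraceB Γ1 =
          ptraceB ((1 : Matrix (Fin dA) (Fin dA) ℂ) ⊗ₖ S1 - V1)
          + ptraceB (partialTransposeOut (V1 - Γ1)) := by
        ext a a'
        simp only [Matrix.sub_apply, Matrix.add_apply, Matrix.smul_apply, ptraceB,
          Matrix.of_apply, partialTransposeOut, Matrix.kroneckerMap_apply, Matrix.one_apply,
          smul_eq_mul, mul_one]
        rw [Finset.sum_sub_distrib, Finset.sum_sub_distrib]
        have h1 : ∑ b : Fin dB, (if a = a' then (1:ℂ) else 0) * S1 b b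
            = (if a = a' then (1:ℂ) else 0) * S1.trace := by
          simp [Matrix.trace, Finset.mul_sum]
        rw [h1, hS1re]
        ring
      rw [e]
      exact (ptraceB_psd h14).add (ptraceB_psd h12)
    refine ⟨S3, V3, hS3, hV3, ?_, ?_, ?_, ?_, le_of_eq ?_⟩
    · have e : partialTransposeOut (V3 + choiMatrix (M2 ∘ₗ M1))
          = ctr Γ1 (partialTransposeOut (V2 + Γ2)) := by
        rw [choi_comp, hV3def, ← hΓ1, ← hΓ2, ← ctr_add_right, pt_ctr]
      rw [e]; exact ctr_psd hM1 h21
    · have e : partialTransposeOut (V3 - choiMatrix (M2 ∘ₗ M1))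
          = ctr Γ1 (partialTransposeOut (V2 - Γ2)) := by
        rw [choi_comp, hV3def, ← hΓ1, ← hΓ2, ← ctr_sub_right, pt_ctr]
      rw [e]; exact ctr_psd hM1 h22
    · have e : (1 : Matrix (Fin dA) (Fin dA) ℂ) ⊗ₖ S3 + V3 =
          (c • (1 : Matrix (Fin dA) (Fin dA) ℂ) - ptraceB Γ1) ⊗ₖ S2
          + ctr Γ1 ((1 : Matrix (Fin dB) (Fin dB) ℂ) ⊗ₖ S2 + V2) := by
        ext p q
        simp only [Matrix.add_apply, Matrix.sub_apply, Matrix.smul_apply,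
          Matrix.kroneckerMap_apply, ctr_apply, Matrix.of_apply, ptraceB, Matrix.one_apply,
          smul_eq_mul, mul_one, hS3def]
        rw [Finset.sum_comm]
        have h2 : ∀ b' : Fin dB, ∑ b : Fin dB,
            Γ1 (p.1, b) (q.1, b') * ((if b = b' then (1:ℂ) else 0) * S2 p.2 q.2 + V2 (b, p.2) (b', q.2))
            = Γ1 (p.1, b') (q.1, b') * S2 p.2 q.2
              + ∑ b : Fin dB, Γ1 (p.1, b) (q.1, b') * V2 (b, p.2) (b', q.2) := by
          intro b'
          simp only [mul_add, Finset.sum_add_distrib]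
          congr 1
          simp only [ite_mul, one_mul, zero_mul, mul_ite, mul_zero]
          rw [Finset.sum_ite_eq' Finset.univ b' (fun b => Γ1 (p.1, b) (q.1, b') * S2 p.2 q.2)]
          simp
        rw [Finset.sum_congr rfl (fun b' _ => h2 b')]
        rw [Finset.sum_add_distrib, ← Finset.sum_mul, Finset.sum_comm]
        ring_nf
        rfl
      rw [e]
      exact (kron_psd hTrm hS2psd).add (ctr_psd hM1 h23)
    · have e : (1 : Matrix (Fin dA) (Fin dA) ℂ) ⊗ₖ S3 - V3 =
          (c • (1 : Matrix (Fin dA) (Fin dA) ℂ) - ptraceB Γ1) ⊗ₖ S2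
          + ctr Γ1 ((1 : Matrix (Fin dB) (Fin dB) ℂ) ⊗ₖ S2 - V2) := by
        ext p q
        simp only [Matrix.add_apply, Matrix.sub_apply, Matrix.smul_apply,
          Matrix.kroneckerMap_apply, ctr_apply, Matrix.of_apply, ptraceB, Matrix.one_apply,
          smul_eq_mul, mul_one, hS3def]
        rw [Finset.sum_comm]
        have h2 : ∀ b' : Fin dB, ∑ b : Fin dB,
            Γ1 (p.1, b) (q.1, b') * ((if b = b' then (1:ℂ) else 0) * S2 p.2 q.2 - V2 (b, p.2) (b', q.2))
            = Γ1 (p.1, b') (q.1, b') * S2 p.2 q.2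
              - ∑ b : Fin dB, Γ1 (p.1, b) (q.1, b') * V2 (b, p.2) (b', q.2) := by
          intro b'
          simp only [mul_sub, Finset.sum_sub_distrib]
          congr 1
          simp only [ite_mul, one_mul, zero_mul, mul_ite, mul_zero]
          rw [Finset.sum_ite_eq' Finset.univ b' (fun b => Γ1 (p.1, b) (q.1, b') * S2 p.2 q.2)]
          simp
        rw [Finset.sum_congr rfl (fun b' _ => h2 b')]
        rw [Finset.sum_sub_distrib, ← Finset.sum_mul, Finset.sum_comm]
        ring_nf
        rfl
      rw [e]
      exact (kron_psd hTrm hS2psd).add (ctr_psd hM1 h24)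
    · rw [hS3def, Matrix.trace_smul, hc]
      simp [Complex.mul_re]


noncomputable def feasSet {dA dB : ℕ}
    (M : Matrix (Fin dA) (Fin dA) ℂ →ₗ[ℂ] Matrix (Fin dB) (Fin dB) ℂ) : Set ℝ :=
  {x : ℝ | ∃ (S : Matrix (Fin dB) (Fin dB) ℂ)
      (V : Matrix (Fin dA × Fin dB) (Fin dA × Fin dB) ℂ),
    S.IsHermitian ∧ V.IsHermitian ∧
    (partialTransposeOut (V + choiMatrix M)).PosSemidef ∧
    (partialTransposeOut (V - choiMatrix M)).PosSemidef ∧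
    ((1 : Matrix (Fin dA) (Fin dA) ℂ) ⊗ₖ S + V).PosSemidef ∧
    ((1 : Matrix (Fin dA) (Fin dA) ℂ) ⊗ₖ S - V).PosSemidef ∧
    x = S.trace.re}

lemma beta_eq {dA dB : ℕ}
    (M : Matrix (Fin dA) (Fin dA) ℂ →ₗ[ℂ] Matrix (Fin dB) (Fin dB) ℂ) :
    beta M = sInf (feasSet M) := rfl

lemma mem_nonneg {dA dB : ℕ} (hdA : 0 < dA)
    (M : Matrix (Fin dA) (Fin dA) ℂ →ₗ[ℂ] Matrix (Fin dB) (Fin dB) ℂ) :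
    ∀ x ∈ feasSet M, 0 ≤ x := by
  rintro x ⟨S, V, hS, hV, h3, h4, h5, h6, rfl⟩
  have h0 : ((1 : Matrix (Fin dA) (Fin dA) ℂ) ⊗ₖ S).PosSemidef := half_psd (V := V) h5 h6
  exact psd_trace_re_nonneg (corner_psd h0 ⟨0, hdA⟩)

lemma beta_degenerate {dA dB : ℕ} (h : dA = 0 ∨ dB = 0)
    (M : Matrix (Fin dA) (Fin dA) ℂ →ₗ[ℂ] Matrix (Fin dB) (Fin dB) ℂ) :
    beta M = 0 := by
  have hemp : IsEmpty (Fin dA × Fin dB) := by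
    rcases h with h | h
    · exact ⟨fun p => absurd p.1.2 (by omega)⟩
    · exact ⟨fun p => absurd p.2.2 (by omega)⟩
  rcases Nat.eq_zero_or_pos dB with hdB | hdB
  · have hset : feasSet M = {0} := by
      ext x
      constructor
      · rintro ⟨S, V, hS, hV, h3, h4, h5, h6, rfl⟩
        have : S.trace = 0 := by
          subst hdB
          simp [Matrix.trace]
        simp [this]
      · rintro rfl
        exact ⟨0, 0, Matrix.isHermitian_zero, Matrix.isHermitian_zero,
          psd_of_isEmpty _, psd_of_isEmpty _, psd_of_isEmpty _, psd_of_isEmpty _, by simp⟩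
    rw [beta_eq, hset, csInf_singleton]
  · have hdA : dA = 0 := by rcases h with h | h <;> omega
    have hnb : ¬ BddBelow (feasSet M) := by
      intro ⟨r, hr⟩
      have hmem : (r - 1 : ℝ) ∈ feasSet M := by
        refine ⟨(((r - 1) / dB : ℝ) : ℂ) • (1 : Matrix (Fin dB) (Fin dB) ℂ), 0, ?_, 
          Matrix.isHermitian_zero, psd_of_isEmpty _, psd_of_isEmpty _, psd_of_isEmpty _,
          psd_of_isEmpty _, ?_⟩
        · unfold Matrix.IsHermitian
          rw [Matrix.conjTranspose_smul, Matrix.conjTranspose_one]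
          congr 1
          simp [Complex.star_def, Complex.conj_ofReal]
        · rw [Matrix.trace_smul, Matrix.trace_one, smul_eq_mul]
          rw [show ((Fintype.card (Fin dB) : ℕ) : ℂ) = ((dB : ℝ) : ℂ) by simp]
          rw [← Complex.ofReal_mul, Complex.ofReal_re]
          field_simp
      have := hr hmem
      linarith
    rw [beta_eq, Real.sInf_of_not_bddBelow hnb]

/-- Submultiplicativity of β under composition (point-to-point):
given feasible pairs `(S¹, V¹)` for `β(ℳ¹)` and `(S², V²)` for `β(ℳ²)`, there is a
feasible pair for `β(ℳ² ∘ ℳ¹)` with value at most `Tr[S¹]·Tr[S²]`; consequently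
`β(ℳ² ∘ ℳ¹) ≤ β(ℳ¹)·β(ℳ²)`. -/
theorem beta_submultiplicative {dA dB dC : ℕ}
    (M1 : Matrix (Fin dA) (Fin dA) ℂ →ₗ[ℂ] Matrix (Fin dB) (Fin dB) ℂ)
    (M2 : Matrix (Fin dB) (Fin dB) ℂ →ₗ[ℂ] Matrix (Fin dC) (Fin dC) ℂ)
    (hM1 : (choiMatrix M1).PosSemidef) (hM2 : (choiMatrix M2).PosSemidef)
    (S1 : Matrix (Fin dB) (Fin dB) ℂ)
    (V1 : Matrix (Fin dA × Fin dB) (Fin dA × Fin dB) ℂ)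
    (hS1 : S1.IsHermitian) (hV1 : V1.IsHermitian)
    (h11 : (partialTransposeOut (V1 + choiMatrix M1)).PosSemidef)
    (h12 : (partialTransposeOut (V1 - choiMatrix M1)).PosSemidef)
    (h13 : ((1 : Matrix (Fin dA) (Fin dA) ℂ) ⊗ₖ S1 + V1).PosSemidef)
    (h14 : ((1 : Matrix (Fin dA) (Fin dA) ℂ) ⊗ₖ S1 - V1).PosSemidef)
    (S2 : Matrix (Fin dC) (Fin dC) ℂ)
    (V2 : Matrix (Fin dB × Fin dC) (Fin dB × Fin dC) ℂ)
    (hS2 : S2.IsHermitian) (hV2 : V2.IsHermitian)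
    (h21 : (partialTransposeOut (V2 + choiMatrix M2)).PosSemidef)
    (h22 : (partialTransposeOut (V2 - choiMatrix M2)).PosSemidef)
    (h23 : ((1 : Matrix (Fin dB) (Fin dB) ℂ) ⊗ₖ S2 + V2).PosSemidef)
    (h24 : ((1 : Matrix (Fin dB) (Fin dB) ℂ) ⊗ₖ S2 - V2).PosSemidef) :
    (∃ (S3 : Matrix (Fin dC) (Fin dC) ℂ)
        (V3 : Matrix (Fin dA × Fin dC) (Fin dA × Fin dC) ℂ),
      S3.IsHermitian ∧ V3.IsHermitian ∧
      (partialTransposeOut (V3 + choiMatrix (M2 ∘ₗ M1))).PosSemidef ∧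
      (partialTransposeOut (V3 - choiMatrix (M2 ∘ₗ M1))).PosSemidef ∧
      ((1 : Matrix (Fin dA) (Fin dA) ℂ) ⊗ₖ S3 + V3).PosSemidef ∧
      ((1 : Matrix (Fin dA) (Fin dA) ℂ) ⊗ₖ S3 - V3).PosSemidef ∧
      S3.trace.re ≤ S1.trace.re * S2.trace.re)
    ∧ beta (M2 ∘ₗ M1) ≤ beta M1 * beta M2 := by
  constructor
  · exact key M1 M2 hM1 hM2 S1 V1 hS1 hV1 h11 h12 h13 h14 S2 V2 hS2 hV2 h21 h22 h23 h24
  · rcases Nat.eq_zero_or_pos dA with hdA | hdA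
    · rw [beta_degenerate (Or.inl hdA) M1, beta_degenerate (Or.inl hdA) (M2 ∘ₗ M1), zero_mul]
    · obtain ⟨S3, V3, c1, c2, c3, c4, c5, c6, c7⟩ :=
        key M1 M2 hM1 hM2 S1 V1 hS1 hV1 h11 h12 h13 h14 S2 V2 hS2 hV2 h21 h22 h23 h24
      have hmem3 : S3.trace.re ∈ feasSet (M2 ∘ₗ M1) := ⟨S3, V3, c1, c2, c3, c4, c5, c6, rfl⟩
      have hT3bdd : BddBelow (feasSet (M2 ∘ₗ M1)) := ⟨0, fun x hx => mem_nonneg hdA _ x hx⟩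
      have hT3ne : (feasSet (M2 ∘ₗ M1)).Nonempty := ⟨_, hmem3⟩
      have hmem1 : S1.trace.re ∈ feasSet M1 := ⟨S1, V1, hS1, hV1, h11, h12, h13, h14, rfl⟩
      have hmem2 : S2.trace.re ∈ feasSet M2 := ⟨S2, V2, hS2, hV2, h21, h22, h23, h24, rfl⟩
      have hT1ne : (feasSet M1).Nonempty := ⟨_, hmem1⟩
      have hT2ne : (feasSet M2).Nonempty := ⟨_, hmem2⟩
      have hT1bdd : BddBelow (feasSet M1) := ⟨0, fun x hx => mem_nonneg hdA _ x hx⟩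
      have hb1 : 0 ≤ beta M1 := le_csInf hT1ne (mem_nonneg hdA M1)
      rcases Nat.eq_zero_or_pos dB with hdB | hdB
      · have hb2 : beta M2 = 0 := beta_degenerate (Or.inl hdB) M2
        have h1 : beta (M2 ∘ₗ M1) ≤ S3.trace.re := csInf_le hT3bdd hmem3
        have hS1tr : S1.trace.re = 0 := by
          subst hdB
          simp [Matrix.trace]
        rw [hS1tr, zero_mul] at c7
        rw [hb2, mul_zero]
        linarith
      · have hT2bdd : BddBelow (feasSet M2) := ⟨0, fun x hx => mem_nonneg hdB _ x hx⟩
        have hb2 : 0 ≤ beta M2 := le_csInf hT2ne (mem_nonneg hdB M2)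
        have main : ∀ ε : ℝ, 0 < ε → beta (M2 ∘ₗ M1) ≤ (beta M1 + ε) * (beta M2 + ε) := by
          intro ε hε
          obtain ⟨x1, hx1mem, hx1⟩ := (csInf_lt_iff hT1bdd hT1ne).mp
            (lt_add_of_pos_right (sInf (feasSet M1)) hε)
          obtain ⟨x2, hx2mem, hx2⟩ := (csInf_lt_iff hT2bdd hT2ne).mp
            (lt_add_of_pos_right (sInf (feasSet M2)) hε)
          have hx1n : 0 ≤ x1 := mem_nonneg hdA M1 x1 hx1mem
          have hx2n : 0 ≤ x2 := mem_nonneg hdB M2 x2 hx2mem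
          obtain ⟨S1', V1', hS1', hV1', g11, g12, g13, g14, hx1e⟩ := hx1mem
          obtain ⟨S2', V2', hS2', hV2', g21, g22, g23, g24, hx2e⟩ := hx2mem
          obtain ⟨S3', V3', d1, d2, d3, d4, d5, d6, d7⟩ :=
            key M1 M2 hM1 hM2 S1' V1' hS1' hV1' g11 g12 g13 g14 S2' V2' hS2' hV2' g21 g22 g23 g24
          have hmem3' : S3'.trace.re ∈ feasSet (M2 ∘ₗ M1) :=
            ⟨S3', V3', d1, d2, d3, d4, d5, d6, rfl⟩
          have h1 : beta (M2 ∘ₗ M1) ≤ S3'.trace.re := csInf_le hT3bdd hmem3'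
          rw [← hx1e, ← hx2e] at d7
          have h2 : x1 * x2 ≤ (beta M1 + ε) * (beta M2 + ε) := by
            rw [beta_eq, beta_eq]
            apply mul_le_mul hx1.le hx2.le hx2n
            rw [← beta_eq]
            linarith
          linarith
        by_contra hcon
        push_neg at hcon
        set β1 := beta M1
        set β2 := beta M2
        set β3 := beta (M2 ∘ₗ M1)
        set δ := β3 - β1 * β2 with hδdef
        have hδpos : 0 < δ := by simp only [hδdef]; linarith
        set ε := min 1 (δ / (β1 + β2 + 2)) with hεdef
        have hεpos : 0 < ε := lt_min one_pos (div_pos hδpos (by linarith))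
        have hε1 : ε ≤ 1 := min_le_left _ _
        have hε2 : ε * (β1 + β2 + 2) ≤ δ := by
          have := min_le_right 1 (δ / (β1 + β2 + 2))
          rw [hεdef]
          calc min 1 (δ / (β1 + β2 + 2)) * (β1 + β2 + 2)
              ≤ (δ / (β1 + β2 + 2)) * (β1 + β2 + 2) := by
                apply mul_le_mul_of_nonneg_right this (by linarith)
            _ = δ := by field_simp
        have h := main ε hεpos
        nlinarith [h, hε1, hε2, hεpos, hδpos, mul_pos hεpos hεpos]
end
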